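/- Let G ⊆ [-∞,∞]^X be a complete subspace (stable under arbitrary suprema and addition of real scalars) that is proper and point separating. For x ∈ X define e_x = sup{u ∈ G | u(x) ≤ 0}. Then: (a) e_x ∈ G and e_x(x) = 0; (b) e_x is inf-irreducible in G; (c) for x ≠ x' and λ ∈ [-∞,∞], e_x ≠ e_{x'} + λ; (d) e_x(y) = sup_{u ∈ G} (u(y) − u(x)) with −∞ absorbing; (e) every f ∈ G satisfies f = inf_{x ∈ Dom(f)} (e_x + f(x)); (f) the triangle inequality e_x(x'') ≤ e_{x'}(x'') + e_x(x') holds for all x, x', x'' ∈ X. -/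

import Mathlib

open scoped Classical

/-- `G` is stable under arbitrary pointwise suprema. -/
def SupStable {X : Type*} (G : Set (X → EReal)) : Prop :=
  ∀ S : Set (X → EReal), S ⊆ G → (fun x => ⨆ f ∈ S, f x) ∈ G

/-- A complete subspace: stable under arbitrary suprema and addition of real scalars. -/
def CompleteSubspace {X : Type*} (G : Set (X → EReal)) : Prop :=
  SupStable G ∧ ∀ g ∈ G, ∀ l : ℝ, (fun x => g x + (l : EReal)) ∈ G

/-- `G` is proper: at every point some function of `G` takes a finite value. -/
def ProperAt {X : Type*} (G : Set (X → EReal)) : Prop :=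
  ∀ x : X, ∃ g ∈ G, g x ≠ ⊤ ∧ g x ≠ ⊥

/-- `G` is point separating. -/
def Separating {X : Type*} (G : Set (X → EReal)) : Prop :=
  ∀ x x' : X, x ≠ x' → ∃ g₁ ∈ G, ∃ g₂ ∈ G, ∃ a₁ b₁ a₂ b₂ : ℝ,
    g₁ x = (a₁ : EReal) ∧ g₁ x' = (b₁ : EReal) ∧ g₂ x = (a₂ : EReal) ∧ g₂ x' = (b₂ : EReal) ∧
    a₁ - b₁ ≠ a₂ - b₂

/-- `e_x = sup { u ∈ G | u(x) ≤ 0 }`. -/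
noncomputable def eFun {X : Type*} (G : Set (X → EReal)) (x : X) : X → EReal :=
  fun z => ⨆ u ∈ {u | u ∈ G ∧ u x ≤ 0}, u z

/-- Addition on `EReal` with `+∞` absorbing. -/
noncomputable def tadd (a b : EReal) : EReal := if a = ⊤ ∨ b = ⊤ then ⊤ else a + b

section Aux

variable {X : Type*} {G : Set (X → EReal)}

lemma ereal_trichot (a : EReal) : a = ⊥ ∨ a = ⊤ ∨ ∃ r : ℝ, a = (r : EReal) := by
  induction a using EReal.rec with
  | bot => exact Or.inl rfl
  | coe r => exact Or.inr (Or.inr ⟨r, rfl⟩)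
  | top => exact Or.inr (Or.inl rfl)

lemma tadd_coe (a : EReal) (c : ℝ) : tadd a (c : EReal) = a + c := by
  unfold tadd
  rcases eq_or_ne a ⊤ with h | h
  · rw [h, EReal.top_add_coe, if_pos (Or.inl rfl)]
  · rw [if_neg]
    push_neg
    exact ⟨h, EReal.coe_ne_top c⟩

lemma eFun_mem (hG : CompleteSubspace G) (x : X) : eFun G x ∈ G :=
  hG.1 {u | u ∈ G ∧ u x ≤ 0} (fun _ hu => hu.1)

lemma le_eFun {u : X → EReal} (hu : u ∈ G) {x : X} (hx : u x ≤ 0) (z : X) :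
    u z ≤ eFun G x z :=
  le_iSup₂ (f := fun (v : X → EReal) (_ : v ∈ {u | u ∈ G ∧ u x ≤ 0}) => v z) u ⟨hu, hx⟩

lemma eFun_le {x z : X} {b : EReal} (h : ∀ u ∈ G, u x ≤ 0 → u z ≤ b) :
    eFun G x z ≤ b :=
  iSup₂_le fun u hu => h u hu.1 hu.2

lemma sub_le_eFun (hG : CompleteSubspace G) {u : X → EReal} (hu : u ∈ G) {x : X} {a : ℝ}
    (hux : u x = (a : EReal)) (z : X) : u z + ((-a : ℝ) : EReal) ≤ eFun G x z := by
  have hv : (fun w => u w + ((-a : ℝ) : EReal)) ∈ G := hG.2 u hu (-a)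
  refine le_eFun hv ?_ z
  show u x + ((-a : ℝ) : EReal) ≤ 0
  rw [hux, ← EReal.coe_add]
  simp

lemma eFun_self (hG : CompleteSubspace G) (hprop : ProperAt G) (x : X) :
    eFun G x x = 0 := by
  refine le_antisymm (eFun_le fun u _ h0 => h0) ?_
  obtain ⟨g, hg, ht, hb⟩ := hprop x
  obtain ⟨a, ha⟩ : ∃ a : ℝ, g x = (a : EReal) := by
    rcases ereal_trichot (g x) with h | h | h
    · exact absurd h hb
    · exact absurd h ht
    · exact h
  have := sub_le_eFun hG hg ha x
  rw [ha, ← EReal.coe_add] at this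
  simpa using this

lemma eFun_top_of_bot (hG : CompleteSubspace G) {u : X → EReal} (hu : u ∈ G) {x z : X}
    (hux : u x = ⊥) (huz : u z ≠ ⊥) : eFun G x z = ⊤ := by
  have key : ∀ l : ℝ, u z + (l : EReal) ≤ eFun G x z := by
    intro l
    have hv : (fun w => u w + (l : EReal)) ∈ G := hG.2 u hu l
    refine le_eFun hv ?_ z
    show u x + (l : EReal) ≤ 0
    rw [hux, EReal.bot_add]; exact bot_le
  rcases ereal_trichot (u z) with h | h | ⟨r, h⟩
  · exact absurd h huz
  · have h0 := key 0
    rw [h] at h0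
    have : (⊤ : EReal) ≤ eFun G x z := le_trans (by norm_num) h0
    exact top_le_iff.mp this
  · by_contra hne
    have hlt : eFun G x z < ⊤ := lt_top_iff_ne_top.mpr hne
    obtain ⟨t, h1, _⟩ := EReal.exists_between_coe_real hlt
    have h2 := key (t - r)
    rw [h, ← EReal.coe_add] at h2
    have h3 : (r + (t - r) : ℝ) = t := by ring
    rw [h3] at h2
    exact absurd h2 (not_le.mpr h1)

lemma coe_sub_le_eFun (hG : CompleteSubspace G) {u : X → EReal} (hu : u ∈ G) {x z : X}
    {a b : ℝ} (hux : u x = (a : EReal)) (huz : u z = (b : EReal)) :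
    ((b - a : ℝ) : EReal) ≤ eFun G x z := by
  have h1 := sub_le_eFun hG hu hux z
  rw [huz, ← EReal.coe_add] at h1
  have h2 : (b - a : ℝ) = b + -a := by ring
  rw [h2]
  exact h1

end Aux

theorem stmt5 {X : Type*} (G : Set (X → EReal)) (hG : CompleteSubspace G)
    (hprop : ProperAt G) (hsep : Separating G) :
    -- (a)
    (∀ x, eFun G x ∈ G ∧ eFun G x x = 0) ∧
    -- (b) e_x is inf-irreducible in G
    (∀ x, ∀ g ∈ G, ∀ h ∈ G, eFun G x = g ⊓ h → eFun G x = g ∨ eFun G x = h) ∧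
    -- (c)
    (∀ x x' : X, x ≠ x' → ∀ l : EReal, eFun G x ≠ fun z => eFun G x' z + l) ∧
    -- (d)
    (∀ x y, eFun G x y = ⨆ u ∈ G, (u y - u x)) ∧
    -- (e) representation formula, with +∞ absorbing
    (∀ f ∈ G, ∀ y, f y = ⨅ x ∈ {x | f x ≠ ⊤}, tadd (eFun G x y) (f x)) ∧
    -- (f) triangle inequality
    (∀ x x' x'' : X, eFun G x x'' ≤ tadd (eFun G x' x'') (eFun G x x')) := by
  refine ⟨fun x => ⟨eFun_mem hG x, eFun_self hG hprop x⟩, ?_, ?_, ?_, ?_, ?_⟩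
  -- (b)
  · intro x g hg h hh heq
    have hx0 : min (g x) (h x) = 0 := by
      have : (g ⊓ h) x = 0 := by rw [← heq]; exact eFun_self hG hprop x
      exact this
    have hle : eFun G x ≤ g ⊓ h := le_of_eq heq
    rcases le_total (g x) (h x) with hcase | hcase
    · left
      have hgx : g x ≤ 0 := by rw [← hx0, min_eq_left hcase]
      exact le_antisymm (le_trans hle inf_le_left) (fun z => le_eFun hg hgx z)
    · right
      have hhx : h x ≤ 0 := by rw [← hx0, min_eq_right hcase]
      exact le_antisymm (le_trans hle inf_le_right) (fun z => le_eFun hh hhx z)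
  -- (c)
  · intro x x' hne l heq
    obtain ⟨g₁, hg₁, g₂, hg₂, a₁, b₁, a₂, b₂, h1x, h1x', h2x, h2x', hab⟩ := hsep x x' hne
    have hx : eFun G x x = eFun G x' x + l := congrFun heq x
    have hx' : eFun G x x' = eFun G x' x' + l := congrFun heq x'
    rw [eFun_self hG hprop x] at hx
    rw [eFun_self hG hprop x', zero_add] at hx'
    have hb1 : ((b₁ - a₁ : ℝ) : EReal) ≤ eFun G x x' := coe_sub_le_eFun hG hg₁ h1x h1x'
    have hb2 : ((b₂ - a₂ : ℝ) : EReal) ≤ eFun G x x' := coe_sub_le_eFun hG hg₂ h2x h2x'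
    have hb1' : ((a₁ - b₁ : ℝ) : EReal) ≤ eFun G x' x := coe_sub_le_eFun hG hg₁ h1x' h1x
    have hb2' : ((a₂ - b₂ : ℝ) : EReal) ≤ eFun G x' x := coe_sub_le_eFun hG hg₂ h2x' h2x
    have hlb : l ≠ ⊥ := by
      intro hl
      rw [hx', hl] at hb1
      exact absurd (le_bot_iff.mp hb1) (EReal.coe_ne_bot _)
    have hlt : l ≠ ⊤ := by
      intro hl
      rw [hl] at hx
      have hb : eFun G x' x ≠ ⊥ := by
        intro hbb
        rw [hbb] at hb1'
        exact absurd (le_bot_iff.mp hb1') (EReal.coe_ne_bot _)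
      rw [EReal.add_top_of_ne_bot hb] at hx
      exact absurd hx.symm (by simp)
    obtain ⟨lr, hlr⟩ : ∃ r : ℝ, l = (r : EReal) := by
      rcases ereal_trichot l with h | h | h
      · exact absurd h hlb
      · exact absurd h hlt
      · exact h
    rw [hlr] at hx hx'
    have h5 : eFun G x' x + (lr : EReal) + ((-lr : ℝ) : EReal) = eFun G x' x := by
      rw [add_assoc, ← EReal.coe_add]; norm_num
    have h6 : eFun G x' x = ((-lr : ℝ) : EReal) := by
      calc eFun G x' x = eFun G x' x + (lr : EReal) + ((-lr : ℝ) : EReal) := h5.symm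
        _ = 0 + ((-lr : ℝ) : EReal) := by rw [← hx]
        _ = ((-lr : ℝ) : EReal) := zero_add _
    rw [hx'] at hb1 hb2
    rw [h6] at hb1' hb2'
    have i1 : b₁ - a₁ ≤ lr := EReal.coe_le_coe_iff.mp hb1
    have i2 : b₂ - a₂ ≤ lr := EReal.coe_le_coe_iff.mp hb2
    have i3 : a₁ - b₁ ≤ -lr := EReal.coe_le_coe_iff.mp hb1'
    have i4 : a₂ - b₂ ≤ -lr := EReal.coe_le_coe_iff.mp hb2'
    exact hab (by linarith)
  -- (d)
  · intro x y
    apply le_antisymm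
    · refine eFun_le fun u hu hx0 => ?_
      refine le_trans ?_ (le_iSup₂ (f := fun (u : X → EReal) (_ : u ∈ G) => u y - u x) u hu)
      have hneg : (0 : EReal) ≤ -u x := by
        have := EReal.neg_le_neg_iff.mpr hx0
        simpa using this
      calc u y = u y + 0 := (add_zero _).symm
        _ ≤ u y + -u x := add_le_add_right hneg _
        _ = u y - u x := (sub_eq_add_neg _ _).symm
    · refine iSup₂_le fun u hu => ?_
      rcases ereal_trichot (u x) with h | h | ⟨a, h⟩
      · rcases eq_or_ne (u y) ⊥ with hy | hy
        · rw [hy, EReal.bot_sub]; exact bot_le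
        · rw [eFun_top_of_bot hG hu h hy]; exact le_top
      · rw [h, EReal.sub_top]; exact bot_le
      · have h1 := sub_le_eFun hG hu h y
        rw [h, sub_eq_add_neg, ← EReal.coe_neg]
        exact h1
  -- (e)
  · intro f hf y
    apply le_antisymm
    · refine le_iInf₂ fun x hx => ?_
      rcases ereal_trichot (f x) with h | h | ⟨c, h⟩
      · rw [h]
        rcases eq_or_ne (eFun G x y) ⊤ with ht | ht
        · rw [ht]; unfold tadd; rw [if_pos (Or.inl rfl)]; exact le_top
        · have hfy : f y = ⊥ := by
            by_contra hfy
            exact ht (eFun_top_of_bot hG hf h hfy)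
          rw [hfy]; exact bot_le
      · exact absurd h hx
      · rw [h, tadd_coe]
        have h1 := sub_le_eFun hG hf h y
        have h2 := add_le_add_left h1 (c : EReal)
        have h3 : f y + ((-c : ℝ) : EReal) + (c : EReal) = f y := by
          rw [add_assoc, ← EReal.coe_add]; norm_num
        rw [h3] at h2
        exact h2
    · rcases eq_or_ne (f y) ⊤ with h | h
      · rw [h]; exact le_top
      · refine le_trans (iInf₂_le y h) ?_
        rw [eFun_self hG hprop y]
        unfold tadd
        rw [if_neg]
        · rw [zero_add]
        · push_neg
          exact ⟨by simp, h⟩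
  -- (f)
  · intro x x' x''
    rcases ereal_trichot (eFun G x x') with h | h | ⟨c, h⟩
    · rw [h]
      rcases eq_or_ne (eFun G x' x'') ⊤ with ht | ht
      · rw [ht]; unfold tadd; rw [if_pos (Or.inl rfl)]; exact le_top
      · have hbot : eFun G x x'' ≤ ⊥ := by
          refine eFun_le fun u hu hx0 => ?_
          have hux' : u x' = ⊥ := by
            have := le_eFun hu hx0 x'
            rw [h] at this
            exact le_bot_iff.mp this
          rcases eq_or_ne (u x'') ⊥ with hb | hb
          · rw [hb]
          · exact absurd (eFun_top_of_bot hG hu hux' hb) ht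
        exact le_trans hbot bot_le
    · rw [h]; unfold tadd; rw [if_pos (Or.inr rfl)]; exact le_top
    · rw [h, tadd_coe]
      refine eFun_le fun u hu hx0 => ?_
      have h1 : u x' ≤ (c : EReal) := by
        have := le_eFun hu hx0 x'
        rwa [h] at this
      have h2 : u x' + ((-c : ℝ) : EReal) ≤ 0 := by
        calc u x' + ((-c : ℝ) : EReal) ≤ (c : EReal) + ((-c : ℝ) : EReal) :=
              add_le_add_left h1 _
          _ = 0 := by rw [← EReal.coe_add]; norm_num
      have hv : (fun w => u w + ((-c : ℝ) : EReal)) ∈ G := hG.2 u hu (-c)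
      have h3 := le_eFun hv h2 x''
      have h4 := add_le_add_left h3 (c : EReal)
      have h5 : u x'' + ((-c : ℝ) : EReal) + (c : EReal) = u x'' := by
        rw [add_assoc, ← EReal.coe_add]; norm_num
      rw [h5] at h4
      exact h4
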